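/- If two words w_1, w_2 on a totally ordered alphabet have the same evaluation (same multiset of letters, in the same positions-count sense) and std(w_1) is sylvester congruent to std(w_2), then w_1 is sylvester congruent to w_2. -/

import Mathlib

open scoped Classical

/-- `d` is a diagonal of the convex `(n+2)`-gon with vertices `0,…,n+1`
(in clockwise increasing order): it joins two nonadjacent vertices. -/
def IsDiagonal (n : ℕ) (d : ℕ × ℕ) : Prop :=
  d.1 < d.2 ∧ d.2 ≤ n + 1 ∧ d.2 ≠ d.1 + 1 ∧ ¬(d.1 = 0 ∧ d.2 = n + 1)

/-- Two diagonals of a convex polygon cross. -/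
def Crosses (d e : ℕ × ℕ) : Prop :=
  (d.1 < e.1 ∧ e.1 < d.2 ∧ d.2 < e.2) ∨ (e.1 < d.1 ∧ d.1 < e.2 ∧ e.2 < d.2)

/-- A triangulation of the convex `(n+2)`-gon: `n-1` pairwise noncrossing diagonals. -/
def IsTriangulation (n : ℕ) (D : Finset (ℕ × ℕ)) : Prop :=
  (∀ d ∈ D, IsDiagonal n d) ∧ (∀ d ∈ D, ∀ e ∈ D, ¬ Crosses d e) ∧ D.card = n - 1

/-- `{a,b}` (with `a<b`) is an edge of the triangulation `D`: a polygon side or a diagonal. -/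
def IsEdge (n : ℕ) (D : Finset (ℕ × ℕ)) (a b : ℕ) : Prop :=
  a < b ∧ b ≤ n + 1 ∧ (b = a + 1 ∨ (a = 0 ∧ b = n + 1) ∨ (a, b) ∈ D)

/-- `{a,b,c}` (with `a<b<c`) is a (triangular) face of the triangulation `D`. -/
def IsFace (n : ℕ) (D : Finset (ℕ × ℕ)) (a b c : ℕ) : Prop :=
  a < b ∧ b < c ∧ IsEdge n D a b ∧ IsEdge n D b c ∧ IsEdge n D a c

/-- An ear of a triangulation: a vertex incident to no diagonal. -/
def IsEar (n : ℕ) (D : Finset (ℕ × ℕ)) (v : ℕ) : Prop :=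
  v ≤ n + 1 ∧ ∀ d ∈ D, d.1 ≠ v ∧ d.2 ≠ v

/-- Degree of a vertex: number of edges (polygon sides and diagonals) incident to it. -/
noncomputable def degreeOf (n : ℕ) (D : Finset (ℕ × ℕ)) (v : ℕ) : ℕ :=
  ((Finset.range (n + 2)).filter (fun w => w ≠ v ∧ IsEdge n D (min v w) (max v w))).card

/-- The set of faces of a triangulation, as increasing triples. -/
noncomputable def facesSet (n : ℕ) (D : Finset (ℕ × ℕ)) : Finset (ℕ × ℕ × ℕ) :=
  (Finset.range (n + 2) ×ˢ Finset.range (n + 2) ×ˢ Finset.range (n + 2)).filter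
    (fun t => IsFace n D t.1 t.2.1 t.2.2)

/-- Predecessor of `v` in the vertex set `Y`. -/
def predIn (Y : Finset ℕ) (v : ℕ) : ℕ := WithBot.unbotD 0 (Y.filter (· < v)).max
/-- Successor of `v` in the vertex set `Y`. -/
def succIn (Y : Finset ℕ) (v : ℕ) : ℕ := WithTop.untopD 0 (Y.filter (v < ·)).min

/-- The iterative neighbor-joining construction: for each successive letter,
join its two current neighbors by a diagonal and delete the letter's vertex. -/
def phiAux : List ℕ → Finset ℕ → Finset (ℕ × ℕ)
  | [], _ => ∅
  | [_], _ => ∅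
  | v :: rest, Y => insert (predIn Y v, succIn Y v) (phiAux rest (Y.erase v))

/-- The map `φ` from permutations (standard words, letters `1,…,n`) to
triangulations of the `(n+2)`-gon with vertices `0,…,n+1`. -/
def phiT (n : ℕ) (l : List ℕ) : Finset (ℕ × ℕ) := phiAux l (Finset.range (n + 2))

/-- `t` is the third vertex of a face of `D` containing the polygon side `{i, i+1}`. -/
def FaceOnEdge (n : ℕ) (D : Finset (ℕ × ℕ)) (i t : ℕ) : Prop :=
  (t < i ∧ IsFace n D t i (i + 1)) ∨ (i + 1 < t ∧ IsFace n D i (i + 1) t)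

/-- `D` and `D'` differ by one diagonal flip, in the quadrilateral `a<b<c<d`. -/
def FlipAdj (n : ℕ) (D D' : Finset (ℕ × ℕ)) : Prop :=
  ∃ a b c d : ℕ, a < b ∧ b < c ∧ c < d ∧
    ((IsFace n D a b d ∧ IsFace n D b c d ∧ D' = insert (a, c) (D.erase (b, d))) ∨
     (IsFace n D a b c ∧ IsFace n D a c d ∧ D' = insert (b, d) (D.erase (a, c))))

/-- Sylvester adjacency: `u x z u' y u'' ~ u z x u' y u''` with `x ≤ y < z`. -/
def SylvAdj (w1 w2 : List ℕ) : Prop :=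
  ∃ (u u' u'' : List ℕ) (x y z : ℕ), x ≤ y ∧ y < z ∧
    w1 = u ++ x :: z :: (u' ++ y :: u'') ∧ w2 = u ++ z :: x :: (u' ++ y :: u'')

/-- Sylvester congruence: the equivalence relation generated by sylvester adjacency. -/
def SylvCong : List ℕ → List ℕ → Prop := Relation.EqvGen SylvAdj

/-- Standardization of a word: replace the occurrences of the smallest letter,
left to right, by `1, 2, …`, then continue with the next letter, etc. -/
def stdW (w : List ℕ) : List ℕ :=
  (List.range w.length).map (fun i =>
    (((List.range w.length).filter (fun j =>
      w.getD j 0 < w.getD i 0 ∨ (w.getD j 0 = w.getD i 0 ∧ j < i))).length) + 1)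

/-- Partial sums of an evaluation `μ`. -/
def Msum (μ : ℕ → ℕ) (s : ℕ) : ℕ := ∑ t ∈ Finset.range s, μ t

/-- The color (block index) of the vertex `i` for the increasing coloring `ε_μ`. -/
noncomputable def colOf (μ : ℕ → ℕ) (p i : ℕ) : ℕ :=
  ((Finset.range p).filter (fun s => Msum μ (s + 1) < i)).card

/-- `D`, colored by the increasing coloring `ε_μ`, is a simple colored triangulation. -/
def SimpleFor (n p : ℕ) (μ : ℕ → ℕ) (D : Finset (ℕ × ℕ)) : Prop :=
  IsTriangulation n D ∧
  (∀ d ∈ D, 1 ≤ d.1 → d.2 ≤ n → colOf μ p d.1 ≠ colOf μ p d.2) ∧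
  (∀ i t, 1 ≤ i → i + 1 ≤ n → colOf μ p i = colOf μ p (i + 1) →
    FaceOnEdge n D i t → t < i)

/-- Switched flip: a diagonal flip (preserving vertex colors) whose two adjacent
faces (with middle vertices `b` and `c`) have different colors. -/
def SwFlipAdj (n p : ℕ) (μ : ℕ → ℕ) (D D' : Finset (ℕ × ℕ)) : Prop :=
  ∃ a b c d : ℕ, a < b ∧ b < c ∧ c < d ∧ colOf μ p b ≠ colOf μ p c ∧
    ((IsFace n D a b d ∧ IsFace n D b c d ∧ D' = insert (a, c) (D.erase (b, d))) ∨
     (IsFace n D a b c ∧ IsFace n D a c d ∧ D' = insert (b, d) (D.erase (a, c))))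

inductive BT where
  | leaf : BT
  | node : ℕ → BT → BT → BT
deriving DecidableEq

inductive Sh where
  | leaf : Sh
  | node : Sh → Sh → Sh
deriving DecidableEq

def insP (f : ℕ → ℕ → Bool) (a : ℕ) : BT → BT
  | .leaf => .node a .leaf .leaf
  | .node c l r => if f a c then .node c (insP f a l) r else .node c l (insP f a r)

def ins : ℕ → BT → BT := insP (fun a c => decide (a ≤ c))

def Pt (w : List ℕ) : BT := w.foldr ins .leaf

def labels : BT → Multiset ℕ
  | .leaf => 0
  | .node c l r => c ::ₘ (labels l + labels r)

def BInv : BT → Prop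
  | .leaf => True
  | .node c l r => (∀ a ∈ labels l, a ≤ c) ∧ (∀ a ∈ labels r, c < a) ∧ BInv l ∧ BInv r

def shapeT : BT → Sh
  | .leaf => .leaf
  | .node _ l r => .node (shapeT l) (shapeT r)

def inorder : BT → List ℕ
  | .leaf => []
  | .node c l r => inorder l ++ c :: inorder r

def canon : BT → List ℕ
  | .leaf => []
  | .node c l r => canon l ++ canon r ++ [c]

lemma labels_insP (f : ℕ → ℕ → Bool) (a : ℕ) : ∀ t, labels (insP f a t) = a ::ₘ labels t := by
  intro t
  induction t with
  | leaf => simp [insP, labels]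
  | node c l r ihl ihr =>
    by_cases h : f a c <;>
      simp only [insP, h, if_true, if_false, labels, ihl, ihr, Bool.false_eq_true] <;>
      simp only [← Multiset.singleton_add] <;> abel

lemma labels_ins (a : ℕ) (t : BT) : labels (ins a t) = a ::ₘ labels t := labels_insP _ a t

lemma labels_Pt (w : List ℕ) : labels (Pt w) = ↑w := by
  induction w with
  | nil => rfl
  | cons a w ih => simp [Pt, labels_ins] at *; simp [ih]

lemma binv_ins (a : ℕ) : ∀ t, BInv t → BInv (ins a t) := by
  intro t
  induction t with
  | leaf => intro _; simp [ins, insP, BInv, labels]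
  | node c l r ihl ihr =>
    rintro ⟨hl, hr, il, ir⟩
    by_cases h : a ≤ c
    · simp only [ins, insP, decide_eq_true_eq] at *
      rw [if_pos h]
      refine ⟨?_, hr, ihl il, ir⟩
      intro b hb; rw [labels_insP] at hb
      rcases Multiset.mem_cons.mp hb with h' | h'
      · exact h' ▸ h
      · exact hl b h'
    · simp only [ins, insP, decide_eq_true_eq] at *
      rw [if_neg h]
      refine ⟨hl, ?_, il, ihr ir⟩
      intro b hb; rw [labels_insP] at hb
      rcases Multiset.mem_cons.mp hb with h' | h'
      · omega
      · exact hr b h'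

lemma binv_Pt (w : List ℕ) : BInv (Pt w) := by
  induction w with
  | nil => trivial
  | cons a w ih => exact binv_ins a _ ih

lemma ins_node (a c : ℕ) (l r : BT) :
    ins a (BT.node c l r) = if a ≤ c then BT.node c (ins a l) r else BT.node c l (ins a r) := by
  by_cases h : a ≤ c <;> simp [ins, insP, h]

lemma ins_comm {x y z : ℕ} (hxy : x ≤ y) (hyz : y < z) :
    ∀ t, BInv t → y ∈ labels t → ins x (ins z t) = ins z (ins x t) := by
  intro t
  induction t with
  | leaf => intro _ h; simp [labels] at h
  | node c l r ihl ihr =>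
    rintro ⟨hl, hr, il, ir⟩ hy
    by_cases hx : x ≤ c
    · by_cases hz : z ≤ c
      · -- both left; y ∈ labels l
        have hyl : y ∈ labels l := by
          rcases Multiset.mem_cons.mp hy with h' | h'
          · omega
          rcases Multiset.mem_add.mp h' with h'' | h''
          · exact h''
          · exact absurd (hr y h'') (by omega)
        rw [ins_node z, if_pos hz, ins_node x, if_pos hx, ins_node x, if_pos hx,
          ins_node z, if_pos hz, ihl il hyl]
      · rw [ins_node z, if_neg hz, ins_node x, if_pos hx, ins_node x, if_pos hx,
          ins_node z, if_neg hz]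
    · have hz : ¬ z ≤ c := by omega
      have hyr : y ∈ labels r := by
        rcases Multiset.mem_cons.mp hy with h' | h'
        · omega
        rcases Multiset.mem_add.mp h' with h'' | h''
        · exact absurd (hl y h'') (by omega)
        · exact h''
      rw [ins_node z, if_neg hz, ins_node x, if_neg hx, ins_node x, if_neg hx,
        ins_node z, if_neg hz, ihr ir hyr]

lemma Pt_append (u v : List ℕ) : Pt (u ++ v) = u.foldr ins (Pt v) := by
  simp [Pt, List.foldr_append]

lemma sylvAdj_Pt {w1 w2 : List ℕ} (h : SylvAdj w1 w2) : Pt w1 = Pt w2 := by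
  obtain ⟨u, u', u'', x, y, z, hxy, hyz, h1, h2⟩ := h
  subst h1 h2
  rw [Pt_append, Pt_append]
  congr 1
  show ins x (Pt (z :: (u' ++ y :: u''))) = ins z (Pt (x :: (u' ++ y :: u'')))
  have : Pt (z :: (u' ++ y :: u'')) = ins z (Pt (u' ++ y :: u'')) := rfl
  rw [this]
  have : Pt (x :: (u' ++ y :: u'')) = ins x (Pt (u' ++ y :: u'')) := rfl
  rw [this]
  exact ins_comm hxy hyz _ (binv_Pt _) (by rw [labels_Pt]; simp)

lemma sylvCong_Pt {w1 w2 : List ℕ} (h : SylvCong w1 w2) : Pt w1 = Pt w2 := by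
  induction h with
  | rel _ _ h => exact sylvAdj_Pt h
  | refl => rfl
  | symm _ _ _ ih => exact ih.symm
  | trans _ _ _ _ _ ih1 ih2 => exact ih1.trans ih2
namespace SylvHelper

lemma cong_refl (w : List ℕ) : SylvCong w w := Relation.EqvGen.refl w
lemma cong_symm {u v : List ℕ} (h : SylvCong u v) : SylvCong v u := Relation.EqvGen.symm _ _ h
lemma cong_trans {u v w : List ℕ} (h1 : SylvCong u v) (h2 : SylvCong v w) : SylvCong u w :=
  Relation.EqvGen.trans _ _ _ h1 h2
lemma cong_of_adj {u v : List ℕ} (h : SylvAdj u v) : SylvCong u v := Relation.EqvGen.rel _ _ h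

lemma adj_cons {u v : List ℕ} (a : ℕ) (h : SylvAdj u v) : SylvAdj (a :: u) (a :: v) := by
  obtain ⟨s, s', s'', x, y, z, hxy, hyz, h1, h2⟩ := h
  exact ⟨a :: s, s', s'', x, y, z, hxy, hyz, by simp [h1], by simp [h2]⟩

lemma cong_cons {u v : List ℕ} (a : ℕ) (h : SylvCong u v) : SylvCong (a :: u) (a :: v) := by
  induction h with
  | rel _ _ h => exact cong_of_adj (adj_cons a h)
  | refl w => exact cong_refl _
  | symm _ _ _ ih => exact cong_symm ih
  | trans _ _ _ _ _ ih1 ih2 => exact cong_trans ih1 ih2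

lemma cong_prepend (s : List ℕ) {u v : List ℕ} (h : SylvCong u v) :
    SylvCong (s ++ u) (s ++ v) := by
  induction s with
  | nil => simpa
  | cons a s ih => exact cong_cons a ih

lemma adj_append_right {u v : List ℕ} (t : List ℕ) (h : SylvAdj u v) :
    SylvAdj (u ++ t) (v ++ t) := by
  obtain ⟨s, s', s'', x, y, z, hxy, hyz, h1, h2⟩ := h
  exact ⟨s, s', s'' ++ t, x, y, z, hxy, hyz, by simp [h1], by simp [h2]⟩

lemma cong_append_right {u v : List ℕ} (t : List ℕ) (h : SylvCong u v) :
    SylvCong (u ++ t) (v ++ t) := by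
  induction h with
  | rel _ _ h => exact cong_of_adj (adj_append_right t h)
  | refl w => exact cong_refl _
  | symm _ _ _ ih => exact cong_symm ih
  | trans _ _ _ _ _ ih1 ih2 => exact cong_trans ih1 ih2

lemma moveRight {c a : ℕ} (ha : c < a) :
    ∀ (A : List ℕ), (∀ e ∈ A, e ≤ c) → ∀ (s t : List ℕ),
      SylvCong (a :: (A ++ (s ++ c :: t))) (A ++ (a :: (s ++ c :: t))) := by
  intro A
  induction A with
  | nil => intro _ s t; exact cong_refl _
  | cons e A ih =>
    intro hA s t
    have he : e ≤ c := hA e (by simp)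
    have step : SylvAdj (e :: a :: (A ++ (s ++ c :: t))) (a :: e :: (A ++ (s ++ c :: t))) :=
      ⟨[], A ++ s, t, e, c, a, he, ha, by simp, by simp⟩
    refine cong_trans (cong_symm (cong_of_adj step)) ?_
    have := cong_cons e (ih (fun x hx => hA x (by simp [hx])) s t)
    simpa using this

lemma sortStep (c : ℕ) : ∀ (w : List ℕ),
    SylvCong (w ++ [c])
      ((w.filter (fun x => decide (x ≤ c))) ++ ((w.filter (fun x => decide (c < x))) ++ [c])) := by
  intro w
  induction w with
  | nil => exact cong_refl _
  | cons a w ih =>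
    by_cases h : a ≤ c
    · have h' : ¬ c < a := by omega
      simp only [List.filter_cons, h, h', decide_eq_true_eq, if_true, if_false,
        decide_eq_true_eq]
      have := cong_cons a ih
      simpa using this
    · have h' : c < a := by omega
      simp only [List.filter_cons, h, h', decide_eq_true_eq, decide_eq_true_eq]
      have step1 := cong_cons a ih
      refine cong_trans (by simpa using step1) ?_
      have step2 := moveRight h' (w.filter (fun x => decide (x ≤ c)))
        (fun e he => by simpa using (List.of_mem_filter he)) (w.filter (fun x => decide (c < x))) []
      simpa using step2

lemma Pt_concat (c : ℕ) : ∀ (w : List ℕ),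
    Pt (w ++ [c]) = BT.node c (Pt (w.filter (fun x => decide (x ≤ c))))
      (Pt (w.filter (fun x => decide (c < x)))) := by
  intro w
  induction w with
  | nil => rfl
  | cons a w ih =>
    by_cases h : a ≤ c
    · have h' : ¬ c < a := by omega
      simp only [List.cons_append, List.filter_cons, h, h', decide_eq_true_eq,
        if_true, if_false]
      show ins a (Pt (w ++ [c])) = _
      rw [ih, ins_node, if_pos h]
      rfl
    · have h' : c < a := by omega
      simp only [List.cons_append, List.filter_cons, h, h', decide_eq_true_eq,
        if_true, if_false]
      show ins a (Pt (w ++ [c])) = _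
      rw [ih, ins_node, if_neg h]
      rfl

lemma cong_canon_aux : ∀ (n : ℕ) (w : List ℕ), w.length ≤ n → SylvCong w (canon (Pt w)) := by
  intro n
  induction n with
  | zero =>
    intro w hw
    rw [List.length_eq_zero_iff.mp (Nat.le_zero.mp hw)]
    exact cong_refl _
  | succ n ih =>
    intro w hw
    rcases List.eq_nil_or_concat w with rfl | ⟨w', c, rfl⟩
    · exact cong_refl _
    · rw [List.concat_eq_append] at *
      set A := w'.filter (fun x => decide (x ≤ c)) with hA
      set B := w'.filter (fun x => decide (c < x)) with hB
      have hlw : w'.length ≤ n := by simpa using hw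
      have hlA : A.length ≤ n := le_trans (List.length_filter_le _ _) hlw
      have hlB : B.length ≤ n := le_trans (List.length_filter_le _ _) hlw
      have h1 := sortStep c w'
      have h2 : SylvCong (A ++ (B ++ [c])) (canon (Pt A) ++ (B ++ [c])) :=
        cong_append_right _ (ih A hlA)
      have h3 : SylvCong (canon (Pt A) ++ (B ++ [c])) (canon (Pt A) ++ (canon (Pt B) ++ [c])) :=
        cong_prepend _ (cong_append_right _ (ih B hlB))
      have h4 := cong_trans h1 (cong_trans h2 h3)
      rw [Pt_concat]
      show SylvCong (w' ++ [c]) (canon (BT.node c (Pt A) (Pt B)))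
      simp only [canon]
      simpa using h4

lemma cong_canon (w : List ℕ) : SylvCong w (canon (Pt w)) := cong_canon_aux w.length w le_rfl

end SylvHelper
namespace SylvHelper

lemma coe_inorder : ∀ t : BT, (inorder t : Multiset ℕ) = labels t := by
  intro t
  induction t with
  | leaf => rfl
  | node c l r ihl ihr =>
    simp only [inorder, labels, ← ihl, ← ihr]
    simp

lemma inorder_sorted : ∀ t : BT, BInv t → (inorder t).Pairwise (· ≤ ·) := by
  intro t
  induction t with
  | leaf => intro _; simp [inorder]
  | node c l r ihl ihr =>
    rintro ⟨hl, hr, il, ir⟩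
    have meml : ∀ a ∈ inorder l, a ≤ c := by
      intro a ha
      exact hl a (by rw [← coe_inorder]; exact_mod_cast ha)
    have memr : ∀ a ∈ inorder r, c < a := by
      intro a ha
      exact hr a (by rw [← coe_inorder]; exact_mod_cast ha)
    simp only [inorder, List.pairwise_append, List.pairwise_cons]
    refine ⟨ihl il, ⟨fun b hb => le_of_lt (memr b hb), ihr ir⟩, ?_⟩
    intro a ha b hb
    rcases List.mem_cons.mp hb with rfl | hb
    · exact meml a ha
    · exact le_trans (meml a ha) (le_of_lt (memr b hb))

def shSize : Sh → ℕ
  | .leaf => 0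
  | .node l r => shSize l + shSize r + 1

lemma length_inorder (t : BT) : (inorder t).length = shSize (shapeT t) := by
  induction t with
  | leaf => rfl
  | node c l r ihl ihr => simp [inorder, shapeT, shSize, ihl, ihr]; omega

lemma eq_of_shape_inorder : ∀ t1 t2 : BT, shapeT t1 = shapeT t2 →
    inorder t1 = inorder t2 → t1 = t2 := by
  intro t1
  induction t1 with
  | leaf => intro t2 hs _; cases t2 with
    | leaf => rfl
    | node c l r => simp [shapeT] at hs
  | node c l r ihl ihr =>
    intro t2 hs hi
    cases t2 with
    | leaf => simp [shapeT] at hs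
    | node c' l' r' =>
      simp only [shapeT, Sh.node.injEq] at hs
      have hlen : (inorder l).length = (inorder l').length := by
        rw [length_inorder, length_inorder, hs.1]
      simp only [inorder] at hi
      obtain ⟨h1, h2⟩ := List.append_inj hi hlen
      injection h2 with h2a h2b
      rw [ihl l' hs.1 h1, ihr r' hs.2 h2b, h2a]

lemma eq_of_shape_labels {t1 t2 : BT} (i1 : BInv t1) (i2 : BInv t2)
    (hs : shapeT t1 = shapeT t2) (hlab : labels t1 = labels t2) : t1 = t2 := by
  have hperm : (inorder t1).Perm (inorder t2) := by
    rw [← Multiset.coe_eq_coe, coe_inorder, coe_inorder]; exact hlab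
  have : inorder t1 = inorder t2 :=
    List.Perm.eq_of_pairwise' (inorder_sorted _ i1) (inorder_sorted _ i2) hperm
  exact eq_of_shape_inorder t1 t2 hs this

end SylvHelper
namespace SylvHelper

def mapT (g : ℕ → ℕ) : BT → BT
  | .leaf => .leaf
  | .node c l r => .node (g c) (mapT g l) (mapT g r)

lemma shape_mapT (g : ℕ → ℕ) : ∀ t, shapeT (mapT g t) = shapeT t := by
  intro t
  induction t with
  | leaf => rfl
  | node c l r ihl ihr => simp [mapT, shapeT, ihl, ihr]

def Jt (f : ℕ → ℕ → Bool) (l : List ℕ) : BT := l.foldr (insP f) .leaf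

lemma labels_Jt (f : ℕ → ℕ → Bool) : ∀ l : List ℕ, labels (Jt f l) = ↑l := by
  intro l
  induction l with
  | nil => rfl
  | cons a l ih => show labels (insP f a (Jt f l)) = _; rw [labels_insP, ih]; rfl

lemma insP_congr (f f' : ℕ → ℕ → Bool) (i : ℕ) :
    ∀ t, (∀ j ∈ labels t, f i j = f' i j) → insP f i t = insP f' i t := by
  intro t
  induction t with
  | leaf => intro _; rfl
  | node c l r ihl ihr =>
    intro h
    have hc : f i c = f' i c := h c (by simp [labels])
    have hl := ihl (fun j hj => h j (by simp [labels, hj]))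
    have hr := ihr (fun j hj => h j (by simp [labels, hj]))
    by_cases hb : f i c = true
    · simp [insP, hb, hc ▸ hb, hl]
    · simp only [Bool.not_eq_true] at hb
      simp [insP, hb, hc ▸ hb, hr]

lemma Jt_congr (f f' : ℕ → ℕ → Bool) :
    ∀ l : List ℕ, (∀ i ∈ l, ∀ j ∈ l, f i j = f' i j) → Jt f l = Jt f' l := by
  intro l
  induction l with
  | nil => intro _; rfl
  | cons a l ih =>
    intro h
    show insP f a (Jt f l) = insP f' a (Jt f' l)
    rw [ih (fun i hi j hj => h i (by simp [hi]) j (by simp [hj]))]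
    exact insP_congr f f' a _ (fun j hj => by
      rw [labels_Jt] at hj
      exact h a (by simp) j (by simp [(by exact_mod_cast hj : j ∈ l)]))

lemma insP_map (g : ℕ → ℕ) (f' : ℕ → ℕ → Bool) (i : ℕ) :
    ∀ t, (∀ j ∈ labels t, decide (g i ≤ g j) = f' i j) →
      ins (g i) (mapT g t) = mapT g (insP f' i t) := by
  intro t
  induction t with
  | leaf => intro _; rfl
  | node c l r ihl ihr =>
    intro h
    have hc : decide (g i ≤ g c) = f' i c := h c (by simp [labels])
    have hl := ihl (fun j hj => h j (by simp [labels, hj]))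
    have hr := ihr (fun j hj => h j (by simp [labels, hj]))
    show ins (g i) (BT.node (g c) (mapT g l) (mapT g r)) = _
    by_cases hb : g i ≤ g c
    · have hf : f' i c = true := by rw [← hc]; simpa
      rw [ins_node, if_pos hb, hl]
      simp [insP, hf, mapT]
    · have hf : f' i c = false := by rw [← hc]; simp [hb]
      rw [ins_node, if_neg hb, hr]
      simp [insP, hf, mapT]

lemma Pt_map (g : ℕ → ℕ) (f' : ℕ → ℕ → Bool) :
    ∀ l : List ℕ, List.Pairwise (fun i j => decide (g i ≤ g j) = f' i j) l →
      Pt (l.map g) = mapT g (Jt f' l) := by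
  intro l
  induction l with
  | nil => intro _; rfl
  | cons i l ih =>
    intro h
    rw [List.pairwise_cons] at h
    show ins (g i) (Pt (l.map g)) = mapT g (insP f' i (Jt f' l))
    rw [ih h.2]
    exact insP_map g f' i _ (fun j hj => by
      rw [labels_Jt] at hj
      exact h.1 j (by exact_mod_cast hj))

def bleq (w : List ℕ) (i j : ℕ) : Bool :=
  decide (w.getD i 0 < w.getD j 0 ∨ (w.getD i 0 = w.getD j 0 ∧ i ≤ j))

lemma map_getD_range (l : List ℕ) :
    List.map (fun i => l.getD i 0) (List.range l.length) = l := by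
  apply List.ext_getElem
  · simp
  · intro n h1 h2; simp [List.getD_eq_getElem?_getD, List.getElem?_eq_getElem h2]

lemma shape_Pt_Jt (w : List ℕ) :
    shapeT (Pt w) = shapeT (Jt (bleq w) (List.range w.length)) := by
  have hp : List.Pairwise (fun i j => decide (w.getD i 0 ≤ w.getD j 0) = bleq w i j)
      (List.range w.length) := by
    refine List.Pairwise.imp_of_mem ?_ List.pairwise_lt_range
    intro i j _ _ hij
    unfold bleq
    apply decide_eq_decide.mpr
    omega
  have := Pt_map (fun i => w.getD i 0) (bleq w) (List.range w.length) hp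
  rw [map_getD_range] at this
  rw [this, shape_mapT]

end SylvHelper
namespace SylvHelper

def rk (w : List ℕ) (i : ℕ) : ℕ :=
  ((List.range w.length).filter (fun j =>
    w.getD j 0 < w.getD i 0 ∨ (w.getD j 0 = w.getD i 0 ∧ j < i))).length

lemma getD_map_range (f : ℕ → ℕ) {i n : ℕ} (h : i < n) :
    (((List.range n).map f).getD i 0) = f i := by
  rw [List.getD_eq_getElem?_getD]
  rw [List.getElem?_map]
  rw [List.getElem?_range h]
  rfl

lemma length_stdW (w : List ℕ) : (stdW w).length = w.length := by simp [stdW]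

lemma stdW_getD (w : List ℕ) {i : ℕ} (h : i < w.length) :
    (stdW w).getD i 0 = rk w i + 1 := by
  unfold stdW rk
  exact getD_map_range _ h

lemma countP_mono {p q : ℕ → Bool} : ∀ l : List ℕ, (∀ a ∈ l, p a = true → q a = true) →
    l.countP p ≤ l.countP q := by
  intro l
  induction l with
  | nil => intro _; simp
  | cons a l ih =>
    intro h
    rw [List.countP_cons, List.countP_cons]
    have := ih (fun b hb => h b (by simp [hb]))
    by_cases hp : p a = true
    · have hq := h a (by simp) hp
      simp [hp, hq]; omega
    · simp only [Bool.not_eq_true] at hp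
      simp [hp]; omega

lemma rk_lt (w : List ℕ) {i j : ℕ} (hi : i < w.length) (hj : j < w.length)
    (hij : w.getD i 0 < w.getD j 0 ∨ (w.getD i 0 = w.getD j 0 ∧ i < j)) :
    rk w i < rk w j := by
  set p : ℕ → Bool := fun k =>
    decide (w.getD k 0 < w.getD i 0 ∨ (w.getD k 0 = w.getD i 0 ∧ k < i)) with hp
  set q : ℕ → Bool := fun k =>
    decide (w.getD k 0 < w.getD j 0 ∨ (w.getD k 0 = w.getD j 0 ∧ k < j)) with hq
  have hrki : rk w i = (List.range w.length).countP p := by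
    rw [rk, ← List.countP_eq_length_filter]
  have hrkj : rk w j = (List.range w.length).countP q := by
    rw [rk, ← List.countP_eq_length_filter]
  rw [hrki, hrkj]
  have hmono : ∀ k, p k = true → q k = true := by
    intro k hk
    rw [hp] at hk; rw [hq]
    simp only [decide_eq_true_eq] at *
    omega
  have hpi : p i = false := by rw [hp]; simp
  have hqi : q i = true := by rw [hq]; simp only [decide_eq_true_eq]; omega
  obtain ⟨s, t, hst⟩ := List.append_of_mem (List.mem_range.mpr hi)
  rw [hst, List.countP_append, List.countP_append, List.countP_cons, List.countP_cons,
    hpi, hqi]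
  have h1 := countP_mono s (fun a _ => hmono a)
  have h2 := countP_mono t (fun a _ => hmono a)
  simp only [Bool.false_eq_true, if_true, if_false]
  omega

lemma bleq_stdW (w : List ℕ) {i j : ℕ} (hi : i < w.length) (hj : j < w.length) :
    bleq w i j = bleq (stdW w) i j := by
  unfold bleq
  apply decide_eq_decide.mpr
  rw [stdW_getD w hi, stdW_getD w hj]
  by_cases hij : i = j
  · subst hij; omega
  · have tri : (w.getD i 0 < w.getD j 0 ∨ (w.getD i 0 = w.getD j 0 ∧ i < j)) ∨
        (w.getD j 0 < w.getD i 0 ∨ (w.getD j 0 = w.getD i 0 ∧ j < i)) := by omega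
    rcases tri with h | h
    · have := rk_lt w hi hj h
      constructor
      · intro _; omega
      · intro _; omega
    · have := rk_lt w hj hi h
      constructor
      · intro h'; omega
      · intro h'; omega

lemma shape_Pt_stdW (w : List ℕ) : shapeT (Pt w) = shapeT (Pt (stdW w)) := by
  rw [shape_Pt_Jt, shape_Pt_Jt (stdW w), length_stdW]
  congr 1
  apply Jt_congr
  intro i hi j hj
  exact bleq_stdW w (List.mem_range.mp hi) (List.mem_range.mp hj)

end SylvHelper

/-- If two words have the same evaluation and their standardizations are sylvester
congruent, then the words themselves are sylvester congruent. -/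
theorem stmt13 (w1 w2 : List ℕ) (hev : ∀ c : ℕ, w1.count c = w2.count c)
    (h : SylvCong (stdW w1) (stdW w2)) : SylvCong w1 w2 := by
  have hperm : w1.Perm w2 := List.perm_iff_count.mpr hev
  have hP : Pt (stdW w1) = Pt (stdW w2) := sylvCong_Pt h
  have hs : shapeT (Pt w1) = shapeT (Pt w2) := by
    rw [SylvHelper.shape_Pt_stdW w1, SylvHelper.shape_Pt_stdW w2, hP]
  have hlab : labels (Pt w1) = labels (Pt w2) := by
    rw [labels_Pt, labels_Pt]
    exact_mod_cast Multiset.coe_eq_coe.mpr hperm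
  have hPt : Pt w1 = Pt w2 :=
    SylvHelper.eq_of_shape_labels (binv_Pt w1) (binv_Pt w2) hs hlab
  refine SylvHelper.cong_trans (SylvHelper.cong_canon w1) ?_
  rw [hPt]
  exact SylvHelper.cong_symm (SylvHelper.cong_canon w2)
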